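/- Let O be the valuation ring of a finite extension E of ℚ_p with valuation v (v(p) = 1), and let M ∈ M_n(E). Write det(I − XM) = 1 + c_1 X + ... + c_n X^n, and for 1 ≤ s ≤ n let H(s) := min over all s×s minors δ of M of v(δ) (the s-th Hodge number, with H(s) = +∞ if all s×s minors vanish). Then v(c_s) ≥ H(s) for every s; consequently, the Newton polygon of det(I − XM) (the lower convex hull of the points (s, v(c_s)) and (0,0)) lies on or above the convex hull of the points (s, H(s)). -/

import Mathlib

open Polynomial Matrix

/-- The reverse characteristic polynomial `det(I − X·M)` of a square matrix. -/
noncomputable def revCharPoly {E : Type*} [CommRing E] {n : ℕ}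
    (M : Matrix (Fin n) (Fin n) E) : Polynomial E :=
  ((1 : Matrix (Fin n) (Fin n) (Polynomial E)) -
    (Polynomial.X : Polynomial E) • M.map Polynomial.C).det

/-- Determinant of the matrix obtained by mixing rows of `1` (on `A`) with rows of
`-(X • M.map C)` (off `A`). -/
lemma piecewise_det {R : Type*} [CommRing R] {n : ℕ}
    (M : Matrix (Fin n) (Fin n) R) (A : Finset (Fin n)) :
    (Matrix.of (A.piecewise
        ((1 : Matrix (Fin n) (Fin n) (Polynomial R)) : Fin n → Fin n → Polynomial R)
        ((-((Polynomial.X : Polynomial R) • M.map Polynomial.C) : Matrix (Fin n) (Fin n) (Polynomial R)) :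
          Fin n → Fin n → Polynomial R))).det =
      (-Polynomial.X : Polynomial R) ^ (Fintype.card {i // i ∉ A}) *
        Polynomial.C ((M.toSquareBlockProp (fun i => i ∉ A)).det) := by
  classical
  letI : Fintype {a // a ∈ A} := Subtype.fintype _
  letI : Fintype {a // a ∉ A} := Subtype.fintype _
  set P : Matrix (Fin n) (Fin n) (Polynomial R) :=
    Matrix.of (A.piecewise
      ((1 : Matrix (Fin n) (Fin n) (Polynomial R)) : Fin n → Fin n → Polynomial R)
      ((-((Polynomial.X : Polynomial R) • M.map Polynomial.C) : Matrix (Fin n) (Fin n) (Polynomial R)) :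
        Fin n → Fin n → Polynomial R)) with hP
  have hPmem : ∀ i ∈ A, ∀ j, P i j = (1 : Matrix (Fin n) (Fin n) (Polynomial R)) i j := by
    intro i hi j
    exact congrFun (Finset.piecewise_eq_of_mem _ _ _ hi) j
  have hPnot : ∀ i, i ∉ A → ∀ j, P i j = -(Polynomial.X * Polynomial.C (M i j)) := by
    intro i hi j
    rw [show P i j = (-((Polynomial.X : Polynomial R) • M.map Polynomial.C) :
        Matrix (Fin n) (Fin n) (Polynomial R)) i j from
        congrFun (Finset.piecewise_eq_of_notMem _ _ _ hi) j]
    simp [Matrix.smul_apply]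
  have htri : ∀ i, (i ∈ A) → ∀ j, ¬(j ∈ A) → P i j = 0 := by
    intro i hi j hj
    rw [hPmem i hi j, Matrix.one_apply_ne]
    rintro rfl; exact hj hi
  rw [Matrix.twoBlockTriangular_det' P (· ∈ A) htri]
  have h1 : P.toSquareBlockProp (· ∈ A) = 1 := by
    apply Matrix.ext; intro i j
    rw [Matrix.toSquareBlockProp, Matrix.toBlock_apply, hPmem i.1 i.2 j.1]
    by_cases h : i = j
    · subst h; simp [Matrix.one_apply]
    · rw [Matrix.one_apply_ne, Matrix.one_apply_ne h]
      exact fun hc => h (Subtype.ext hc)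
  have h2 : P.toSquareBlockProp (fun i => ¬(i ∈ A)) =
      (-Polynomial.X : Polynomial R) • ((M.toSquareBlockProp (fun i => i ∉ A)).map Polynomial.C) := by
    apply Matrix.ext; intro i j
    rw [Matrix.toSquareBlockProp, Matrix.toBlock_apply, hPnot i.1 i.2 j.1]
    simp [Matrix.toSquareBlockProp, Matrix.toBlock_apply]
  have hmap : ∀ B : Matrix {i // i ∉ A} {i // i ∉ A} R,
      (B.map Polynomial.C).det = Polynomial.C B.det := fun B => by
    rw [← RingHom.mapMatrix_apply, ← RingHom.map_det]
  rw [h1, Matrix.det_one, one_mul, h2, Matrix.det_smul, hmap]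

lemma coeff_aux {E : Type*} [CommRing E] (k s : ℕ) (d : E) :
    ((-Polynomial.X : Polynomial E) ^ k * Polynomial.C d).coeff s
      = if k = s then (-1 : E)^s * d else 0 := by
  have h1 : ((-1 : Polynomial E))^k = Polynomial.C ((-1:E)^k) := by simp
  rw [neg_pow, h1, mul_assoc, Polynomial.coeff_C_mul,
    mul_comm ((Polynomial.X : Polynomial E)^k), Polynomial.C_mul_X_pow_eq_monomial,
    Polynomial.coeff_monomial]
  rcases eq_or_ne k s with h | h
  · subst h; simp
  · simp [h]

theorem stmt_18 (p : ℕ) [Fact p.Prime] (E : Type*) [NormedField E]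
    [Algebra ℚ_[p] E] [FiniteDimensional ℚ_[p] E]
    (hiso : ∀ x : ℚ_[p], ‖algebraMap ℚ_[p] E x‖ = ‖x‖)
    (n : ℕ) (M : Matrix (Fin n) (Fin n) E) :
    ∀ s : ℕ, 1 ≤ s → s ≤ n →
      ∃ f g : Fin s → Fin n, StrictMono f ∧ StrictMono g ∧
        ‖(revCharPoly M).coeff s‖ ≤ ‖(M.submatrix f g).det‖ := by
  classical
  intro s hs1 hsn
  haveI : IsUltrametricDist E := by
    apply IsUltrametricDist.isUltrametricDist_of_forall_norm_natCast_le_one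
    intro m
    calc ‖(m : E)‖ = ‖algebraMap ℚ_[p] E (m : ℚ_[p])‖ := by rw [map_natCast]
      _ = ‖(m : ℚ_[p])‖ := hiso _
      _ ≤ 1 := by
          have := Padic.norm_int_le_one (p := p) (m : ℤ)
          simpa using this
  have hdet : revCharPoly M = ∑ A : Finset (Fin n),
      (Matrix.of (A.piecewise
        ((1 : Matrix (Fin n) (Fin n) (Polynomial E)) : Fin n → Fin n → Polynomial E)
        ((-((Polynomial.X : Polynomial E) • M.map Polynomial.C) :
            Matrix (Fin n) (Fin n) (Polynomial E)) : Fin n → Fin n → Polynomial E))).det := by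
    unfold revCharPoly
    rw [sub_eq_add_neg]
    exact MultilinearMap.map_add_univ
      (Matrix.detRowAlternating :
        (Fin n → Polynomial E) [⋀^Fin n]→ₗ[Polynomial E] Polynomial E).toMultilinearMap _ _
  have hcoeff : (revCharPoly M).coeff s = ∑ A : Finset (Fin n),
      (if Fintype.card {i // i ∉ A} = s
        then (-1 : E)^s * (M.toSquareBlockProp (fun i => i ∉ A)).det else 0) := by
    rw [hdet, Polynomial.finset_sum_coeff]
    exact Finset.sum_congr rfl fun A _ => by rw [piecewise_det, coeff_aux]
  obtain ⟨A, -, hle⟩ := IsUltrametricDist.exists_norm_finset_sum_le Finset.univ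
    (fun A : Finset (Fin n) => if Fintype.card {i // i ∉ A} = s
      then (-1 : E)^s * (M.toSquareBlockProp (fun i => i ∉ A)).det else 0)
  rw [← hcoeff] at hle
  by_cases h : Fintype.card {i // i ∉ A} = s
  · have hB : Aᶜ.card = s := by
      rw [← h]
      exact ((Fintype.card_congr (Equiv.subtypeEquivRight
        (fun x => (Finset.mem_compl (s := A)).symm))).trans (Fintype.card_coe _)).symm
    set e := Aᶜ.orderIsoOfFin hB with he
    set f : Fin s → Fin n := fun i => ((e i : ↥Aᶜ) : Fin n) with hf
    have hfmono : StrictMono f := fun a b hab => by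
      simpa [hf] using e.strictMono hab
    have hq : ((M.toSquareBlockProp (fun i => i ∉ A)).submatrix
        (e.toEquiv.trans (Equiv.subtypeEquivRight fun x => Finset.mem_compl))
        (e.toEquiv.trans (Equiv.subtypeEquivRight fun x => Finset.mem_compl)))
        = M.submatrix f f := rfl
    refine ⟨f, f, hfmono, hfmono, ?_⟩
    have hd : (M.submatrix f f).det = (M.toSquareBlockProp (fun i => i ∉ A)).det := by
      rw [← hq, Matrix.det_submatrix_equiv_self]
    rw [hd]
    refine hle.trans (le_of_eq ?_)
    rw [if_pos h]
    simp
  · refine ⟨Fin.castLE hsn, Fin.castLE hsn, Fin.strictMono_castLE hsn,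
      Fin.strictMono_castLE hsn, le_trans ?_ (norm_nonneg _)⟩
    rw [if_neg h, norm_zero] at hle
    exact hle
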